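/- arXiv:2307.09389 — 4 statements merged into one kernel-verified Lean document; each statement's English description precedes it below -/
import Mathlib

section
/- For any digraph G and any two vertices x,y, either dist_G(x,y) ≤ mw(G) or dist_G(x,y) = ∞, where mw(G) is the modular width of G. -/
open Classical

variable {V : Type*}

/-- There is a directed walk of length `m` from `x` to `y` in the digraph with arc relation `A`. -/
def HasDWalk {V : Type*} (A : V → V → Prop) (x y : V) (m : ℕ) : Prop :=
  ∃ f : Fin (m + 1) → V, f 0 = x ∧ f (Fin.last m) = y ∧
    ∀ i : Fin m, A (f i.castSucc) (f i.succ)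

/-- `y` is reachable from `x` by a directed path. -/
def DReachable {V : Type*} (A : V → V → Prop) (x y : V) : Prop :=
  ∃ m : ℕ, HasDWalk A x y m

/-- Directed distance: length of a shortest directed path, `⊤` if none exists. -/
noncomputable def ddist {V : Type*} (A : V → V → Prop) (x y : V) : ℕ∞ :=
  sInf {n : ℕ∞ | ∃ m : ℕ, n = (m : ℕ∞) ∧ HasDWalk A x y m}

/-- A resolving set: every vertex is reachable from the set, and every pair of
distinct vertices is distinguished by distance from some vertex of the set. -/
def IsResolvingSet {V : Type*} (A : V → V → Prop) (S : Set V) : Prop :=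
  (∀ v : V, ∃ s ∈ S, DReachable A s v) ∧
  ∀ v w : V, v ≠ w → ∃ s ∈ S, ddist A s v ≠ ddist A s w

/-- A modular decomposition of the vertex subset `X` of width at most `t`:
either `X` is a single vertex, or `X` is partitioned into at most `t` modules
of the induced subgraph on `X`, each recursively decomposed. -/
inductive HasMD {V : Type*} (A : V → V → Prop) : Set V → ℕ → Prop
  | single (x : V) (t : ℕ) : HasMD A {x} t
  | step (X : Set V) (t : ℕ) (P : Finset (Set V))
      (hcard : P.card ≤ t)
      (hsub : ∀ Y ∈ P, Y ⊆ X)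
      (hpart : ∀ x ∈ X, ∃! Y, Y ∈ P ∧ x ∈ Y)
      (hmod : ∀ Y ∈ P, ∀ v ∈ X, v ∉ Y → ∀ x ∈ Y, ∀ y ∈ Y,
        (A v x ↔ A v y) ∧ (A x v ↔ A y v))
      (hrec : ∀ Y ∈ P, HasMD A Y t) : HasMD A X t

/-- The modular width: the least width of a modular decomposition of the whole digraph. -/
noncomputable def modularWidth {V : Type*} (A : V → V → Prop) : ℕ :=
  sInf {t : ℕ | HasMD A Set.univ t}

section Helpers

lemma exists_dup_split {α : Type*} : ∀ {l : List α}, ¬ l.Nodup →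
    ∃ (a : α) (l₁ l₂ l₃ : List α), l = l₁ ++ a :: (l₂ ++ a :: l₃) := by
  intro l hl
  induction l with
  | nil => simp at hl
  | cons b l ih =>
    by_cases hb : b ∈ l
    · obtain ⟨s, t, rfl⟩ := List.append_of_mem hb
      exact ⟨b, [], s, t, by simp⟩
    · have : ¬ l.Nodup := fun h => hl (List.nodup_cons.2 ⟨hb, h⟩)
      obtain ⟨a, l₁, l₂, l₃, rfl⟩ := ih this
      exact ⟨a, b :: l₁, l₂, l₃, by simp⟩

lemma compress {α : Type*} {R : α → α → Prop} :
    ∀ (n : ℕ) (l : List α), l.length ≤ n → l.Chain' (fun a b => a = b ∨ R a b) →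
    ∃ L : List α, L.Chain' R ∧ L.head? = l.head? ∧ L.getLast? = l.getLast? ∧
      L.Nodup ∧ ∀ a ∈ L, a ∈ l := by
  intro n
  induction n with
  | zero =>
    intro l hl _
    have : l = [] := List.eq_nil_of_length_eq_zero (Nat.le_zero.1 hl)
    subst this
    exact ⟨[], by simp [List.Chain'], rfl, rfl, by simp, by simp⟩
  | succ n ih =>
    intro l hl hc
    by_cases hnd : l.Nodup
    · refine ⟨l, ?_, rfl, rfl, hnd, fun a ha => ha⟩
      simp only [List.Chain'] at hc ⊢; rw [List.isChain_iff_getElem] at hc ⊢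
      intro i hi
      rcases hc i hi with h | h
      · exfalso
        have := (List.Nodup.getElem_inj_iff hnd).1 h
        simp at this
      · exact h
    · obtain ⟨a, l₁, l₂, l₃, rfl⟩ := exists_dup_split hnd
      set l' := l₁ ++ a :: l₃ with hl'
      have hlen : l'.length ≤ n := by
        simp [hl'] at hl ⊢; omega
      have hc' : l'.Chain' (fun a b => a = b ∨ R a b) := by
        simp only [List.Chain'] at hc ⊢; rw [List.isChain_append] at hc ⊢
        obtain ⟨h1, h2, h3⟩ := hc
        refine ⟨h1, ?_, ?_⟩
        · have : List.IsChain (fun a b => a = b ∨ R a b) ((a :: l₂) ++ (a :: l₃)) := by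
            simpa using h2
          exact this.right_of_append
        · simpa using h3
      obtain ⟨L, hL1, hL2, hL3, hL4, hL5⟩ := ih l' hlen hc'
      refine ⟨L, hL1, ?_, ?_, hL4, ?_⟩
      · rw [hL2]; simp [hl', List.head?_append]
      · rw [hL3]
        have hsome := List.getLast?_eq_getLast (l := a :: l₃) (by simp)
        have e2 : a :: (l₂ ++ a :: l₃) = (a :: l₂) ++ (a :: l₃) := by simp
        simp only [hl', List.getLast?_append, e2, hsome]
        simp
      · intro b hb
        have := hL5 b hb
        simp [hl'] at this ⊢
        tauto

lemma hasDWalk_iff_list {V : Type*} {A : V → V → Prop} {x y : V} {m : ℕ} :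
    HasDWalk A x y m ↔
      ∃ l : List V, l.Chain' A ∧ l.head? = some x ∧ l.getLast? = some y ∧
        l.length = m + 1 := by
  constructor
  · rintro ⟨f, h0, hl, ha⟩
    refine ⟨List.ofFn f, ?_, ?_, ?_, by simp⟩
    · simp only [List.Chain']; rw [List.isChain_iff_getElem]
      intro i hi
      simp only [List.length_ofFn] at hi
      have := ha ⟨i, by omega⟩
      simp only [List.getElem_ofFn]
      convert this using 2 <;> apply Fin.ext <;> simp
    · rw [List.head?_eq_head (by simp), List.head_ofFn, ← h0]
      congr 1
    · rw [List.getLast?_eq_getLast (by simp), List.getLast_ofFn, ← hl]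
      congr 1
  · rintro ⟨l, hc, hh, hg, hlen⟩
    refine ⟨fun i => l.get (Fin.cast hlen.symm i), ?_, ?_, ?_⟩
    · have : l[0]? = some x := by rw [← List.head?_eq_getElem?]; exact hh
      rw [List.getElem?_eq_getElem (by omega)] at this
      simpa using this
    · have : l[m]? = some y := by
        rw [← hg, List.getLast?_eq_getElem?, hlen, Nat.add_sub_cancel]
      rw [List.getElem?_eq_getElem (by omega)] at this
      simpa [Fin.last] using this
    · intro i
      simp only [List.Chain'] at hc; rw [List.isChain_iff_getElem] at hc
      have := hc i (by omega)
      convert this using 2 <;> simp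

lemma liftWalk {V : Type*} {A : V → V → Prop} {Q : Set V → Set V → Prop}
    (hQ : ∀ Y Z, Q Y Z → ∀ a ∈ Y, ∀ b ∈ Z, A a b)
    (hne : ∀ Y Z, Q Y Z → Z.Nonempty) :
    ∀ (rest : List (Set V)) (Z₀ Z₁ : Set V) (u w : V),
      (Z₀ :: Z₁ :: rest).Chain' Q → u ∈ Z₀ →
      w ∈ ((Z₁ :: rest).getLast (by simp)) →
      ∃ lv : List V, lv.Chain' A ∧ lv.head? = some u ∧ lv.getLast? = some w ∧
        lv.length = rest.length + 2 := by
  intro rest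
  induction rest with
  | nil =>
    intro Z₀ Z₁ u w hc hu hw
    simp only [List.getLast_singleton] at hw
    have hQ01 : Q Z₀ Z₁ := (List.isChain_cons_cons.1 hc).1
    exact ⟨[u, w], by simp [List.Chain', hQ _ _ hQ01 u hu w hw], rfl, rfl, rfl⟩
  | cons Z₂ rest ih =>
    intro Z₀ Z₁ u w hc hu hw
    have hQ01 : Q Z₀ Z₁ := (List.isChain_cons_cons.1 hc).1
    obtain ⟨y₁, hy₁⟩ := hne _ _ hQ01
    have hw' : w ∈ ((Z₂ :: rest).getLast (by simp)) := by
      rwa [List.getLast_cons (by simp)] at hw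
    obtain ⟨lv, h1, h2, h3, h4⟩ := ih Z₁ Z₂ y₁ w (List.isChain_cons_cons.1 hc).2 hy₁ hw'
    refine ⟨u :: lv, ?_, rfl, ?_, by simp [h4]⟩
    · simp only [List.Chain']; rw [List.isChain_cons]
      refine ⟨?_, h1⟩
      intro z hz
      rw [h2] at hz
      simp at hz
      rw [← hz]
      exact hQ _ _ hQ01 u hu y₁ hy₁
    · rw [List.getLast?_eq_getLast (by simp), ← h3,
        List.getLast?_eq_getLast (l := lv) (by rintro rfl; simp at h2)]
      exact congrArg some (List.getLast_cons _)

end Helpers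

lemma key {V : Type*} {A : V → V → Prop} {X : Set V} {t : ℕ} (h : HasMD A X t) :
    ∀ l : List V, l.Chain' A → (∀ v ∈ l, v ∈ X) → l ≠ [] →
    ∃ l' : List V, l'.Chain' A ∧ l'.head? = l.head? ∧ l'.getLast? = l.getLast? ∧
      l'.length ≤ t + 1 := by
  induction h with
  | single x t =>
    intro l hc hmem hne
    refine ⟨[x], by simp [List.Chain'], ?_, ?_, by simp⟩
    · rw [List.head?_eq_head hne]
      have := hmem _ (List.head_mem hne)
      simp only [Set.mem_singleton_iff] at this
      rw [this]
      rfl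
    · rw [List.getLast?_eq_getLast hne]
      have := hmem _ (List.getLast_mem hne)
      simp only [Set.mem_singleton_iff] at this
      rw [this]
      rfl
  | step X t P hcard hsub hpart hmod hrec ih =>
    intro l hc hmem hne
    classical
    -- the module-of function
    set F : V → Set V := fun v => if h : ∃ Y, Y ∈ P ∧ v ∈ Y then h.choose else ∅ with hFdef
    have hF : ∀ v ∈ X, F v ∈ P ∧ v ∈ F v := by
      intro v hv
      obtain ⟨Y, hY, -⟩ := hpart v hv
      have hex : ∃ Y, Y ∈ P ∧ v ∈ Y := ⟨Y, hY⟩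
      simp only [hFdef, dif_pos hex]
      exact hex.choose_spec
    have huniq : ∀ Y ∈ P, ∀ v ∈ Y, F v = Y := by
      intro Y hY v hv
      have hvX : v ∈ X := hsub Y hY hv
      obtain ⟨Z, hZ, hZu⟩ := hpart v hvX
      have h1 := hZu (F v) ⟨(hF v hvX).1, (hF v hvX).2⟩
      have h2 := hZu Y ⟨hY, hv⟩
      rw [h1, h2]
    -- quotient relation
    set Q : Set V → Set V → Prop :=
      fun Y Z => Y ≠ Z ∧ Y.Nonempty ∧ Z.Nonempty ∧ ∀ a ∈ Y, ∀ b ∈ Z, A a b with hQdef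
    have hquot : ∀ v ∈ X, ∀ w ∈ X, A v w → F v = F w ∨ Q (F v) (F w) := by
      intro v hv w hw hA
      by_cases he : F v = F w
      · exact Or.inl he
      right
      obtain ⟨hvP, hvF⟩ := hF v hv
      obtain ⟨hwP, hwF⟩ := hF w hw
      refine ⟨he, ⟨v, hvF⟩, ⟨w, hwF⟩, ?_⟩
      intro a ha b hb
      have hwn : w ∉ F v := fun hm => he ((huniq _ hvP w hm).symm.trans rfl ▸ rfl)
      have hAaw : A a w := ((hmod (F v) hvP w hw hwn v hvF a ha).2).1 hA
      have han : a ∉ F w := by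
        intro hm
        exact he (((huniq _ hvP a ha).symm.trans (huniq _ hwP a hm)))
      have haX : a ∈ X := hsub _ hvP ha
      exact ((hmod (F w) hwP a haX han w hwF b hb).1).1 hAaw
    -- projection of a walk is a quotient walk with possible repeats
    have chainF : ∀ (l₀ : List V), l₀.Chain' A → (∀ v ∈ l₀, v ∈ X) →
        List.Chain' (fun Y Z => Y = Z ∨ Q Y Z) (l₀.map F) := by
      intro l₀
      induction l₀ with
      | nil => simp [List.Chain']
      | cons a l₀ ih2 =>
        intro hc0 hm0
        cases l₀ with
        | nil => simp [List.Chain']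
        | cons b l₀' =>
          rw [List.map_cons, List.map_cons]; simp only [List.Chain']; rw [List.isChain_cons_cons]
          refine ⟨hquot a (hm0 a (by simp)) b (hm0 b (by simp))
            (List.isChain_cons_cons.1 hc0).1, ?_⟩
          have := ih2 (List.isChain_cons_cons.1 hc0).2 (fun v hv => hm0 v (by simp [hv]))
          simpa [List.Chain'] using this
    have hQ1 : ∀ Y Z, Q Y Z → ∀ a ∈ Y, ∀ b ∈ Z, A a b := fun Y Z hq => hq.2.2.2
    have hQ2 : ∀ Y Z, Q Y Z → Z.Nonempty := fun Y Z hq => hq.2.2.1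
    -- main case split
    set x := l.head hne with hxdef
    set y := l.getLast hne with hydef
    have hx : x ∈ X := hmem _ (List.head_mem hne)
    have hy : y ∈ X := hmem _ (List.getLast_mem hne)
    obtain ⟨hMxP, hxMx⟩ := hF x hx
    by_cases hall : ∀ v ∈ l, v ∈ F x
    · exact ih (F x) hMxP l hc hall hne
    · push_neg at hall
      obtain ⟨v₀, hv₀l, hv₀n⟩ := hall
      -- split l at the first vertex outside F x
      set p : V → Bool := fun v => decide (v ∈ F x) with hpdef
      set l₁ := l.takeWhile p with hl₁
      set l₂ := l.dropWhile p with hl₂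
      have hsplit : l₁ ++ l₂ = l := List.takeWhile_append_dropWhile
      have hl₂ne : l₂ ≠ [] := by
        intro hemp
        have : ∀ v ∈ l, p v := by
          intro v hv
          rw [← hsplit, hemp, List.append_nil] at hv
          exact List.mem_takeWhile_imp hv
        have := this v₀ hv₀l
        simp [hpdef] at this
        exact hv₀n this
      set v₁ := l₂.head hl₂ne with hv₁def
      have hv₁n : v₁ ∉ F x := by
        have := List.head_dropWhile_not p hl₂ne
        simpa [hpdef] using this
      have hv₁l : v₁ ∈ l := by
        rw [← hsplit]
        exact List.mem_append_right _ (List.head_mem hl₂ne)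
      have hv₁X : v₁ ∈ X := hmem _ hv₁l
      have hl₁ne : l₁ ≠ [] := by
        intro hemp
        have : l₂ = l := by rw [← hsplit, hemp, List.nil_append]
        have hxh : v₁ = x := by
          rw [hv₁def, hxdef]
          congr 1
        exact hv₁n (hxh ▸ hxMx)
      set x' := l₁.getLast hl₁ne with hx'def
      have hx'Mx : x' ∈ F x := by
        have : x' ∈ l₁ := List.getLast_mem hl₁ne
        have := List.mem_takeWhile_imp (hl₁ ▸ this)
        simpa [hpdef] using this
      have hAx'v₁ : A x' v₁ := by
        have hc2 := hc
        rw [← hsplit] at hc2; simp only [List.Chain'] at hc2; rw [List.isChain_append] at hc2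
        exact hc2.2.2 x' (by rw [List.getLast?_eq_getLast hl₁ne]; rfl) v₁
          (by rw [List.head?_eq_head hl₂ne]; rfl)
      have hAxv₁ : A x v₁ :=
        ((hmod (F x) hMxP v₁ hv₁X hv₁n x hxMx x' hx'Mx).2).2 hAx'v₁
      -- project the tail walk to the quotient and compress
      have hc₂ : l₂.Chain' A := by
        have hc2 := hc
        rw [← hsplit] at hc2; simp only [List.Chain'] at hc2; rw [List.isChain_append] at hc2
        exact hc2.2.1
      have hmem₂ : ∀ v ∈ l₂, v ∈ X := by
        intro v hv
        exact hmem v (by rw [← hsplit]; exact List.mem_append_right _ hv)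
      have hchainL : List.Chain' (fun Y Z => Y = Z ∨ Q Y Z) (l₂.map F) :=
        chainF l₂ hc₂ hmem₂
      obtain ⟨L, hL1, hL2, hL3, hL4, hL5⟩ :=
        compress (l₂.map F).length (l₂.map F) le_rfl hchainL
      have hLP : ∀ Z ∈ L, Z ∈ P := by
        intro Z hZ
        obtain ⟨v, hv, rfl⟩ := List.mem_map.1 (hL5 Z hZ)
        exact (hF v (hmem₂ v hv)).1
      have hLlen : L.length ≤ t := by
        have h1 : L.toFinset.card = L.length := List.toFinset_card_of_nodup hL4
        have h2 : L.toFinset ⊆ P := by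
          intro Z hZ
          exact hLP Z (List.mem_toFinset.1 hZ)
        calc L.length = L.toFinset.card := h1.symm
          _ ≤ P.card := Finset.card_le_card h2
          _ ≤ t := hcard
      have hLhead : L.head? = some (F v₁) := by
        rw [hL2, List.head?_map, List.head?_eq_head hl₂ne]
        rfl
      have hyl₂ : l₂.getLast? = some y := by
        have h1 : l.getLast? = some y := List.getLast?_eq_getLast hne
        rw [← hsplit, List.getLast?_append, List.getLast?_eq_getLast hl₂ne] at h1
        simp only [Option.or] at h1
        rw [List.getLast?_eq_getLast hl₂ne, h1]
      have hLlast : L.getLast? = some (F y) := by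
        rw [hL3, List.getLast?_map, hyl₂]
        rfl
      have hLne : L ≠ [] := by
        intro hemp; rw [hemp] at hLhead; simp at hLhead
      -- two cases on the length of the compressed quotient walk
      match L, hLne with
      | [Z], _ =>
        -- F v₁ = F y ; single arc x → y suffices
        have hZ1 : Z = F v₁ := by simpa using hLhead
        have hZ2 : Z = F y := by simpa using hLlast
        have hyZ : y ∈ F v₁ := by
          rw [← hZ1, hZ2]
          exact (hF y hy).2
        have ht1 : 1 ≤ t := le_trans (Finset.card_pos.2 ⟨F x, hMxP⟩) hcard
        have hAxy : A x y := by
          have hv₁Fv₁ : v₁ ∈ F v₁ := (hF v₁ hv₁X).2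
          have hFv₁P : F v₁ ∈ P := (hF v₁ hv₁X).1
          have hxn : x ∉ F v₁ := by
            intro hm
            have hEq : F x = F v₁ := huniq _ hFv₁P x hm
            rw [← hEq] at hv₁Fv₁
            exact hv₁n hv₁Fv₁
          exact ((hmod (F v₁) hFv₁P x hx hxn v₁ hv₁Fv₁ y hyZ).1).1 hAxv₁
        refine ⟨[x, y], by simp [List.Chain', hAxy], ?_, ?_, by simp; omega⟩
        · rw [List.head?_eq_head hne]; rfl
        · rw [List.getLast?_eq_getLast hne]; rfl
      | Z₀ :: Z₁ :: rest, _ =>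
        have hZ0 : Z₀ = F v₁ := by simpa using hLhead
        have hv₁Z₀ : v₁ ∈ Z₀ := hZ0 ▸ (hF v₁ hv₁X).2
        have hyZk : y ∈ (Z₁ :: rest).getLast (by simp) := by
          have : (Z₀ :: Z₁ :: rest).getLast (by simp) = F y := by
            have := hLlast
            rw [List.getLast?_eq_getLast (by simp : Z₀ :: Z₁ :: rest ≠ [])] at this
            simpa using this
          rw [← List.getLast_cons (l := Z₁ :: rest) (by simp), this]
          exact (hF y hy).2
        obtain ⟨lv, hlv1, hlv2, hlv3, hlv4⟩ :=
          liftWalk hQ1 hQ2 rest Z₀ Z₁ v₁ y hL1 hv₁Z₀ hyZk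
        have hlen2 : rest.length + 2 ≤ t := by
          have : (Z₀ :: Z₁ :: rest).length ≤ t := hLlen
          simp at this; omega
        refine ⟨x :: lv, ?_, ?_, ?_, ?_⟩
        · simp only [List.Chain']; rw [List.isChain_cons]
          refine ⟨?_, hlv1⟩
          intro z hz
          rw [hlv2] at hz
          simp at hz
          rw [← hz]
          exact hAxv₁
        · rw [List.head?_eq_head hne]; rfl
        · have hlvne : lv ≠ [] := by rintro rfl; simp at hlv2
          rw [List.getLast?_eq_getLast (by simp), List.getLast_cons hlvne,
            ← List.getLast?_eq_getLast hlvne, hlv3,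
            List.getLast?_eq_getLast hne]
        · simp only [List.length_cons, hlv4]
          omega

lemma hasMD_univ {V : Type*} [Fintype V] (A : V → V → Prop) :
    HasMD A Set.univ (Fintype.card V) := by
  classical
  refine HasMD.step _ _ (Finset.univ.image fun v => ({v} : Set V)) ?_ ?_ ?_ ?_ ?_
  · exact le_trans Finset.card_image_le (by simp)
  · intro Y hY
    simp only [Finset.mem_image, Finset.mem_univ, true_and] at hY
    obtain ⟨v, rfl⟩ := hY
    simp
  · intro a _
    refine ⟨{a}, ⟨by simp [Finset.mem_image], rfl⟩, ?_⟩
    rintro Y ⟨hY, haY⟩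
    simp only [Finset.mem_image, Finset.mem_univ, true_and] at hY
    obtain ⟨v, rfl⟩ := hY
    simp only [Set.mem_singleton_iff] at haY
    subst haY
    rfl
  · intro Y hY v _ _ a ha b hb
    simp only [Finset.mem_image, Finset.mem_univ, true_and] at hY
    obtain ⟨w, rfl⟩ := hY
    simp only [Set.mem_singleton_iff] at ha hb
    subst ha; subst hb
    exact ⟨Iff.rfl, Iff.rfl⟩
  · intro Y hY
    simp only [Finset.mem_image, Finset.mem_univ, true_and] at hY
    obtain ⟨v, rfl⟩ := hY
    exact HasMD.single v _

/-- every finite directed distance is at most the modular width. -/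
theorem dist_le_modularWidth_or_infinite [Fintype V] (A : V → V → Prop) (x y : V) :
    ddist A x y ≤ (modularWidth A : ℕ∞) ∨ ddist A x y = ⊤ := by
  by_cases h : ∃ m : ℕ, HasDWalk A x y m
  · left
    obtain ⟨m, hm⟩ := h
    obtain ⟨l, hc, hh, hg, hlen⟩ := hasDWalk_iff_list.1 hm
    have hne : l ≠ [] := by
      intro hemp; rw [hemp] at hlen; simp at hlen
    have hMD : HasMD A Set.univ (modularWidth A) := by
      have hset : {t : ℕ | HasMD A Set.univ t}.Nonempty := ⟨_, hasMD_univ A⟩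
      exact Nat.sInf_mem hset
    obtain ⟨l', h1, h2, h3, h4⟩ := key hMD l hc (fun v _ => Set.mem_univ v) hne
    have hl'ne : l' ≠ [] := by
      intro hemp; rw [hemp, hh] at h2; simp at h2
    have hl'len : 1 ≤ l'.length := by
      cases l' with
      | nil => exact absurd rfl hl'ne
      | cons a l'' => simp
    have hwalk : HasDWalk A x y (l'.length - 1) :=
      hasDWalk_iff_list.2 ⟨l', h1, by rw [h2, hh], by rw [h3, hg], by omega⟩
    have hmem : ((l'.length - 1 : ℕ) : ℕ∞) ∈
        {n : ℕ∞ | ∃ m : ℕ, n = (m : ℕ∞) ∧ HasDWalk A x y m} :=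
      ⟨l'.length - 1, rfl, hwalk⟩
    calc ddist A x y ≤ ((l'.length - 1 : ℕ) : ℕ∞) := sInf_le hmem
      _ ≤ (modularWidth A : ℕ∞) := by
          rw [Nat.cast_le]
          omega
  · right
    have hset : {n : ℕ∞ | ∃ m : ℕ, n = (m : ℕ∞) ∧ HasDWalk A x y m} = ∅ := by
      ext n
      simp only [Set.mem_setOf_eq, Set.mem_empty_iff_false, iff_false, not_exists]
      rintro m ⟨-, hw⟩
      exact h ⟨m, hw⟩
    rw [ddist, hset, sInf_empty]
end

section
/- Let 𝒳 = {X₁,…,X_s} be a factorization of a digraph G and let W be a resolving set of G. Then the set {X_i ∈ 𝒳 : W ∩ X_i ≠ ∅} is a resolving set of the quotient digraph G/𝒳. -/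
open Classical

variable {V : Type*}

/-- `X` is a module: every vertex outside `X` relates uniformly to all vertices of `X`. -/
def IsModule {V : Type*} (A : V → V → Prop) (X : Set V) : Prop :=
  ∀ v ∉ X, ∀ x ∈ X, ∀ y ∈ X, (A v x ↔ A v y) ∧ (A x v ↔ A y v)

/-- A factorization: a partition of the vertex set into (nonempty) modules. -/
def IsFactorization {V ι : Type*} (A : V → V → Prop) (X : ι → Set V) : Prop :=
  (∀ i, (X i).Nonempty) ∧ (Pairwise fun i j => Disjoint (X i) (X j)) ∧
  (⋃ i, X i) = Set.univ ∧ ∀ i, IsModule A (X i)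

/-- The quotient digraph of a factorization: an arc from module `i` to module `j`
(`i ≠ j`) iff there is an arc from a vertex of `X i` to a vertex of `X j`. -/
def quotientAdj {V ι : Type*} (A : V → V → Prop) (X : ι → Set V) (i j : ι) : Prop :=
  i ≠ j ∧ ∃ x ∈ X i, ∃ y ∈ X j, A x y

/-- ℕ-indexed reformulation of `HasDWalk`, easier to manipulate. -/
lemma hasDWalk_iff (A : V → V → Prop) (x y : V) (m : ℕ) :
    HasDWalk A x y m ↔ ∃ g : ℕ → V, g 0 = x ∧ g m = y ∧ ∀ i < m, A (g i) (g (i + 1)) := by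
  constructor
  · rintro ⟨f, h0, hl, ha⟩
    refine ⟨fun n => f ⟨min n m, by omega⟩, ?_, ?_, ?_⟩
    · simpa using h0
    · simpa [Fin.last] using hl
    · intro i hi
      have h := ha ⟨i, hi⟩
      have e1 : (⟨min i m, by omega⟩ : Fin (m + 1)) = (⟨i, hi⟩ : Fin m).castSucc := by
        ext; simp [Nat.min_eq_left hi.le]
      have e2 : (⟨min (i + 1) m, by omega⟩ : Fin (m + 1)) = (⟨i, hi⟩ : Fin m).succ := by
        ext; simp [Nat.min_eq_left (Nat.succ_le_of_lt hi)]
      beta_reduce; rw [e1, e2]; exact h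
  · rintro ⟨g, h0, hl, ha⟩
    exact ⟨fun t => g t.val, by simpa using h0, by simpa [Fin.last] using hl,
      fun i => ha i.val i.isLt⟩

lemma hasDWalk_cons {A : V → V → Prop} {x y z : V} {m : ℕ}
    (h : A x y) (hw : HasDWalk A y z m) : HasDWalk A x z (m + 1) := by
  rw [hasDWalk_iff] at hw ⊢
  obtain ⟨g, h0, hl, ha⟩ := hw
  refine ⟨fun n => if n = 0 then x else g (n - 1), by simp, by simp [hl], ?_⟩
  intro i hi
  rcases Nat.eq_zero_or_pos i with rfl | hpos
  · simpa [h0] using h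
  · have h1 : i ≠ 0 := by omega
    have h2 : i + 1 ≠ 0 := by omega
    simp only [h1, h2, if_false]
    have := ha (i - 1) (by omega)
    have e : i - 1 + 1 = i := by omega
    rw [e] at this
    have e2 : i + 1 - 1 = i := by omega
    rw [e2]
    exact this

/-- An arc in the quotient lifts to an arc between any representatives. -/
lemma quot_arc_lift {ι : Type*} {A : V → V → Prop} {X : ι → Set V}
    (hX : IsFactorization A X) {i j : ι} (hij : quotientAdj A X i j)
    {x y : V} (hx : x ∈ X i) (hy : y ∈ X j) : A x y := by
  obtain ⟨hne, a, ha, b, hb, hab⟩ := hij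
  have hdisj := hX.2.1 hne
  have haj : a ∉ X j := fun h => Set.disjoint_left.mp hdisj ha h
  have hyi : y ∉ X i := fun h => Set.disjoint_left.mp hdisj h hy
  have h1 : A a y := ((hX.2.2.2 j a haj b hb y hy).1).mp hab
  exact ((hX.2.2.2 i y hyi a ha x hx).2).mp h1

/-- A walk in the quotient between distinct modules lifts to a walk of the same length. -/
lemma quot_walk_lift {ι : Type*} {A : V → V → Prop} {X : ι → Set V}
    (hX : IsFactorization A X) {i j : ι} (hij : i ≠ j) {m : ℕ}
    (hw : HasDWalk (quotientAdj A X) i j m) {u v : V} (hu : u ∈ X i) (hv : v ∈ X j) :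
    HasDWalk A u v m := by
  rw [hasDWalk_iff] at hw ⊢
  obtain ⟨g, h0, hl, ha⟩ := hw
  have hm : m ≠ 0 := by rintro rfl; exact hij (h0 ▸ hl ▸ rfl)
  refine ⟨fun n => if n = 0 then u else if n = m then v else (hX.1 (g n)).choose, ?_, ?_, ?_⟩
  · simp
  · simp [hm]
  · intro t ht
    have hmem : ∀ n, n ≤ m → (if n = 0 then u else if n = m then v
        else (hX.1 (g n)).choose) ∈ X (g n) := by
      intro n hn
      by_cases h1 : n = 0
      · subst h1; rw [h0]; simpa using hu
      · by_cases h2 : n = m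
        · subst h2; rw [hl]; simp [h1]; exact hv
        · simp only [h1, h2, if_false]; exact (hX.1 (g n)).choose_spec
    exact quot_arc_lift hX (ha t ht) (hmem t (by omega)) (hmem (t + 1) (by omega))

/-- A walk in `G` projects to a walk in the quotient of at most the same length. -/
lemma quot_walk_project {ι : Type*} {A : V → V → Prop} {X : ι → Set V}
    (hX : IsFactorization A X) {u v : V} {m : ℕ} (hw : HasDWalk A u v m)
    {i j : ι} (hu : u ∈ X i) (hv : v ∈ X j) :
    ∃ m' ≤ m, HasDWalk (quotientAdj A X) i j m' := by
  induction m generalizing u i with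
  | zero =>
    rw [hasDWalk_iff] at hw
    obtain ⟨g, h0, hl, _⟩ := hw
    have huv : u = v := h0 ▸ hl ▸ rfl
    subst huv
    have hij : i = j := by
      by_contra h
      exact Set.disjoint_left.mp (hX.2.1 h) hu hv
    subst hij
    exact ⟨0, le_rfl, (hasDWalk_iff _ _ _ _).mpr ⟨fun _ => i, rfl, rfl, by omega⟩⟩
  | succ m ih =>
    rw [hasDWalk_iff] at hw
    obtain ⟨g, h0, hl, ha⟩ := hw
    obtain ⟨k, hk⟩ : ∃ k, g 1 ∈ X k := by
      have hmem : g 1 ∈ ⋃ i, X i := hX.2.2.1 ▸ Set.mem_univ _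
      simpa using hmem
    have hw' : HasDWalk A (g 1) v m := (hasDWalk_iff _ _ _ _).mpr
      ⟨fun n => g (n + 1), rfl, hl, fun t ht => ha (t + 1) (by omega)⟩
    obtain ⟨m', hm', hq⟩ := ih hw' hk
    by_cases hik : i = k
    · exact ⟨m', by omega, hik ▸ hq⟩
    · refine ⟨m' + 1, by omega, hasDWalk_cons ⟨hik, u, hu, g 1, hk, ?_⟩ hq⟩
      have := ha 0 (by omega)
      rwa [h0] at this

lemma ddist_le_of_walk {A : V → V → Prop} {x y : V} {m : ℕ} (h : HasDWalk A x y m) :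
    ddist A x y ≤ (m : ℕ∞) :=
  sInf_le ⟨m, rfl, h⟩

lemma ddist_self (A : V → V → Prop) (x : V) : ddist A x x = 0 := by
  have h : HasDWalk A x x 0 :=
    (hasDWalk_iff _ _ _ _).mpr ⟨fun _ => x, rfl, rfl, by omega⟩
  have := ddist_le_of_walk h
  simpa using this

lemma ddist_ne_zero {A : V → V → Prop} {x y : V} (h : x ≠ y) : ddist A x y ≠ 0 := by
  have h1 : (1 : ℕ∞) ≤ ddist A x y := by
    apply le_sInf
    rintro n ⟨m, rfl, hw⟩
    rcases Nat.eq_zero_or_pos m with rfl | hm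
    · rw [hasDWalk_iff] at hw
      obtain ⟨g, h0, hl, _⟩ := hw
      exact absurd (h0 ▸ hl ▸ rfl) h
    · exact_mod_cast hm
  intro h0
  rw [h0] at h1
  simp at h1

/-- The quotient distance between distinct modules equals the distance between
any representatives. -/
lemma ddist_quot_eq {ι : Type*} {A : V → V → Prop} {X : ι → Set V}
    (hX : IsFactorization A X) {i j : ι} (hij : i ≠ j) {u v : V}
    (hu : u ∈ X i) (hv : v ∈ X j) :
    ddist (quotientAdj A X) i j = ddist A u v := by
  apply le_antisymm
  · apply le_sInf
    rintro n ⟨m, rfl, hw⟩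
    obtain ⟨m', hm', hq⟩ := quot_walk_project hX hw hu hv
    exact (ddist_le_of_walk hq).trans (by exact_mod_cast hm')
  · apply le_sInf
    rintro n ⟨m, rfl, hq⟩
    exact ddist_le_of_walk (quot_walk_lift hX hij hq hu hv)

/-- the modules meeting a resolving set form a resolving set of the quotient. -/
theorem quotient_resolving_set {ι : Type*}
    (A : V → V → Prop) (X : ι → Set V) (hX : IsFactorization A X)
    (W : Set V) (hW : IsResolvingSet A W) :
    IsResolvingSet (quotientAdj A X) {i : ι | (W ∩ X i).Nonempty} := by
  have mem_exists : ∀ v : V, ∃ i, v ∈ X i := fun v => by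
    have hmem : v ∈ ⋃ i, X i := hX.2.2.1 ▸ Set.mem_univ v
    simpa using hmem
  have mem_unique : ∀ {v : V} {i j : ι}, v ∈ X i → v ∈ X j → i = j := by
    intro v i j hi hj
    by_contra h
    exact Set.disjoint_left.mp (hX.2.1 h) hi hj
  constructor
  · intro j
    obtain ⟨v, hv⟩ := hX.1 j
    obtain ⟨s, hs, m, hw⟩ := hW.1 v
    obtain ⟨i, hi⟩ := mem_exists s
    obtain ⟨m', _, hq⟩ := quot_walk_project hX hw hi hv
    exact ⟨i, ⟨s, hs, hi⟩, m', hq⟩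
  · intro i j hij
    obtain ⟨u, hu⟩ := hX.1 i
    obtain ⟨v, hv⟩ := hX.1 j
    have huv : u ≠ v := fun h => hij (mem_unique hu (h ▸ hv))
    obtain ⟨s, hs, hd⟩ := hW.2 u v huv
    obtain ⟨k, hk⟩ := mem_exists s
    refine ⟨k, ⟨s, hs, hk⟩, ?_⟩
    by_cases hki : k = i
    · subst hki
      have hsv : s ≠ v := fun h => hij (mem_unique hk (h ▸ hv))
      rw [ddist_self, ddist_quot_eq hX hij hk hv]
      exact fun h => ddist_ne_zero hsv h.symm
    · by_cases hkj : k = j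
      · subst hkj
        have hsu : s ≠ u := fun h => (Ne.symm hij) (mem_unique hk (h ▸ hu))
        rw [ddist_self, ddist_quot_eq hX (Ne.symm hij) hk hu]
        exact ddist_ne_zero hsu
      · rw [ddist_quot_eq hX hki hk hu, ddist_quot_eq hX hkj hk hv]
        exact hd
end

section
/- Let 𝒳 be a factorization of a digraph G, let W be a resolving set of G, and let X_i ∈ 𝒳 be a module with at least two vertices. Then for all distinct x,y ∈ X_i there exists w ∈ W ∩ X_i with dist_G(w,x) ≠ dist_G(w,y). In particular W ∩ X_i ≠ ∅. -/
open Classical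

variable {V : Type*}

lemma walk_to_module {V : Type*} (A : V → V → Prop) (Xi : Set V) (hmod : IsModule A Xi)
    {w x y : V} (hw : w ∉ Xi) (hx : x ∈ Xi) (hy : y ∈ Xi) {m : ℕ}
    (hwalk : HasDWalk A w x m) : ∃ j ≤ m, HasDWalk A w y j := by
  obtain ⟨f, hf0, hfl, hfa⟩ := hwalk
  set F : ℕ → V := fun n => if h : n ≤ m then f ⟨n, by omega⟩ else x with hF
  have hFm : F m = x := by
    simp only [hF, dif_pos (le_refl m)]
    exact hfl
  have hF0 : F 0 = w := by
    simp only [hF, dif_pos (Nat.zero_le m)]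
    exact hf0
  have hP : ∃ n, n ≤ m ∧ F n ∈ Xi := ⟨m, le_refl _, by rw [hFm]; exact hx⟩
  obtain ⟨j, hjm, hjin, hjmin⟩ : ∃ j, j ≤ m ∧ F j ∈ Xi ∧ ∀ t < j, ¬(t ≤ m ∧ F t ∈ Xi) :=
    ⟨Nat.find hP, (Nat.find_spec hP).1, (Nat.find_spec hP).2, fun t ht => Nat.find_min hP ht⟩
  have hjpos : 0 < j := by
    rcases Nat.eq_zero_or_pos j with h0 | h
    · exact absurd (h0 ▸ hjin) (hF0 ▸ hw)
    · exact h
  have hnotin : ∀ t < j, F t ∉ Xi := fun t ht htin =>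
    hjmin t ht ⟨le_trans (le_of_lt ht) hjm, htin⟩
  refine ⟨j, hjm, fun t => if (t : ℕ) = j then y else F t, ?_, ?_, ?_⟩
  · simp only [Fin.val_zero]
    refine (if_neg (show ¬ (0:ℕ) = j by omega)).trans ?_
    exact hF0
  · simp [Fin.last]
  · intro t
    have ht : (t : ℕ) < j := t.isLt
    have htm : (t : ℕ) < m := lt_of_lt_of_le ht hjm
    have hFt : F (t : ℕ) = f ⟨(t : ℕ), by omega⟩ := by
      simp only [hF]; rw [dif_pos (by omega)]
    have hFt1 : F ((t : ℕ) + 1) = f ⟨(t : ℕ) + 1, by omega⟩ := by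
      simp only [hF]; rw [dif_pos (by omega)]
    have harc : A (F (t : ℕ)) (F ((t : ℕ) + 1)) := by
      rw [hFt, hFt1]
      have := hfa ⟨(t : ℕ), htm⟩
      simpa [Fin.castSucc, Fin.succ, Fin.castAdd, Fin.castLE] using this
    simp only [Fin.coe_castSucc, Fin.val_succ]
    rw [if_neg (by omega : ¬ (t : ℕ) = j)]
    by_cases hc : (t : ℕ) + 1 = j
    · rw [if_pos hc]
      have hFtj : F ((t : ℕ) + 1) ∈ Xi := by rw [hc]; exact hjin
      exact ((hmod (F (t : ℕ)) (hnotin _ ht) (F ((t : ℕ) + 1)) hFtj y hy).1).mp harc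
    · rw [if_neg hc]
      exact harc

lemma ddist_eq_of_module {V : Type*} (A : V → V → Prop) (Xi : Set V) (hmod : IsModule A Xi)
    {w x y : V} (hw : w ∉ Xi) (hx : x ∈ Xi) (hy : y ∈ Xi) :
    ddist A w x = ddist A w y := by
  have key : ∀ {a b : V}, a ∈ Xi → b ∈ Xi → ddist A w b ≤ ddist A w a := by
    intro a b ha hb
    apply le_sInf
    rintro n ⟨m, rfl, hwalk⟩
    obtain ⟨j, hjm, hwalk'⟩ := walk_to_module A Xi hmod hw ha hb hwalk
    exact le_trans (sInf_le ⟨j, rfl, hwalk'⟩) (by exact_mod_cast hjm)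
  exact le_antisymm (key hy hx) (key hx hy)

/-- a resolving set resolves each nontrivial module locally; in
particular it meets each nontrivial module. -/
theorem resolving_set_resolves_module_locally {ι : Type*}
    (A : V → V → Prop) (X : ι → Set V) (hX : IsFactorization A X)
    (W : Set V) (hW : IsResolvingSet A W)
    (i : ι) (hnt : ∃ a ∈ X i, ∃ b ∈ X i, a ≠ b) :
    (∀ x ∈ X i, ∀ y ∈ X i, x ≠ y →
      ∃ w ∈ W ∩ X i, ddist A w x ≠ ddist A w y) ∧ (W ∩ X i).Nonempty := by
  obtain ⟨hne, hdisj, hcov, hmods⟩ := hX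
  have hmod := hmods i
  have main : ∀ x ∈ X i, ∀ y ∈ X i, x ≠ y →
      ∃ w ∈ W ∩ X i, ddist A w x ≠ ddist A w y := by
    intro x hx y hy hxy
    obtain ⟨w, hwW, hwd⟩ := hW.2 x y hxy
    refine ⟨w, ⟨hwW, ?_⟩, hwd⟩
    by_contra hwXi
    exact hwd (ddist_eq_of_module A (X i) hmod hwXi hx hy)
  refine ⟨main, ?_⟩
  obtain ⟨a, ha, b, hb, hab⟩ := hnt
  obtain ⟨w, hw, -⟩ := main a ha b hb hab
  exact ⟨w, hw⟩
end

section
/- Let X be a module of a digraph G, let w₁,w₂ ∈ X, and let x be a vertex with dist_G(w₁,x) ≠ dist_G(w₂,x). Then x ∈ X, and for every vertex y ∉ X, either dist_G(w₁,x) ≠ dist_G(w₁,y) or dist_G(w₂,x) ≠ dist_G(w₂,y). -/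
open Classical

variable {V : Type*}

lemma walk_shift {A : V → V → Prop} {X : Set V} (hX : IsModule A X) (w' : V) (hw' : w' ∈ X) :
    ∀ m w y, w ∈ X → y ∉ X → HasDWalk A w y m → ∃ m' ≤ m, HasDWalk A w' y m' := by
  intro m
  induction m with
  | zero =>
    rintro w y hw hy ⟨f, h0, hl, _⟩
    exact absurd (show y ∈ X by rw [← hl, show Fin.last 0 = 0 from rfl, h0]; exact hw) hy
  | succ k ih =>
    rintro w y hw hy ⟨f, h0, hl, harc⟩
    by_cases h1 : f 1 ∈ X
    · obtain ⟨m', hm', hwalk⟩ := ih (f 1) y h1 hy ⟨fun j => f j.succ, rfl, by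
        show f (Fin.last k).succ = y
        rw [Fin.succ_last]; exact hl, fun i => by
        show A (f i.castSucc.succ) (f i.succ.succ)
        rw [Fin.succ_castSucc]; exact harc i.succ⟩
      exact ⟨m', le_trans hm' (Nat.le_succ k), hwalk⟩
    · refine ⟨k + 1, le_refl _, Function.update f 0 w', Function.update_self _ _ _, ?_, ?_⟩
      · rw [Function.update_of_ne (by simp [Fin.ext_iff]) _ _]; exact hl
      · intro i
        by_cases hi : i = 0
        · subst hi
          have : (0 : Fin (k+1)).castSucc = 0 := rfl
          rw [this, Function.update_self, Function.update_of_ne (by simp [Fin.ext_iff]) _ _]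
          have ha := harc 0
          rw [show (0 : Fin (k+1)).castSucc = 0 from rfl, h0] at ha
          have h01 : (0 : Fin (k+1)).succ = (1 : Fin (k+1+1)) := by
            ext; simp
          rw [h01] at ha ⊢
          exact ((hX (f 1) h1 w hw w' hw').2).mp ha
        · rw [Function.update_of_ne (Fin.castSucc_ne_zero_iff.mpr hi) _ _,
            Function.update_of_ne (Fin.succ_ne_zero i) _ _]
          exact harc i

lemma ddist_eq_of_mem {A : V → V → Prop} {X : Set V} (hX : IsModule A X)
    {w w' y : V} (hw : w ∈ X) (hw' : w' ∈ X) (hy : y ∉ X) :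
    ddist A w y = ddist A w' y := by
  have key : ∀ u ∈ X, ∀ u' ∈ X, ddist A u' y ≤ ddist A u y := by
    intro u hu u' hu'
    apply le_sInf
    rintro n ⟨m, rfl, hwalk⟩
    obtain ⟨m', hm', hwalk'⟩ := walk_shift hX u' hu' m u y hu hy hwalk
    exact le_trans (sInf_le ⟨m', rfl, hwalk'⟩) (by exact_mod_cast hm')
  exact le_antisymm (key w' hw' w hw) (key w hw w' hw')

/-- if two vertices of a module have different distances to ,
then  is in the module, and every outside vertex is distinguished from 
by one of the two. -/
theorem module_distinguishing_pair
    (A : V → V → Prop) (X : Set V) (hX : IsModule A X)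
    (w₁ w₂ : V) (hw₁ : w₁ ∈ X) (hw₂ : w₂ ∈ X)
    (x : V) (hx : ddist A w₁ x ≠ ddist A w₂ x) :
    x ∈ X ∧ ∀ y ∉ X, ddist A w₁ x ≠ ddist A w₁ y ∨ ddist A w₂ x ≠ ddist A w₂ y := by
  have hxX : x ∈ X := by
    by_contra hxn
    exact hx (ddist_eq_of_mem hX hw₁ hw₂ hxn)
  refine ⟨hxX, fun y hy => ?_⟩
  by_contra h
  push_neg at h
  obtain ⟨h1, h2⟩ := h
  exact hx (h1.trans ((ddist_eq_of_mem hX hw₁ hw₂ hy).trans h2.symm))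
end
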